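/- Let A be an m × m matrix with natural-number entries, let v₀, v₁ ∈ Fin m, and let k ≥ 1 be such that every entry of A is strictly less than 2^k. Then there exist N ∈ ℕ, a matrix B indexed by Fin N with all entries at most 2, and an injection ι : Fin m ↪ Fin N such that for all n ∈ ℕ: (Aⁿ) v₀ v₁ = (B^{n·k}) (ι v₀) (ι v₁). -/

import Mathlib

namespace WTU
variable {m : ℕ}

variable (A : Matrix (Fin m) (Fin m) ℕ)

def C : ∀ t : ℕ, Matrix (Fin (t+1) × Fin m) (Fin m) ℕ
  | 0 => fun p v => A p.2 v
  | t+1 => fun p v =>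
      if h : p.1.val < t + 1 then C t (⟨p.1.val, h⟩, p.2) v / 2
      else if p.2 = v then 1 else 0

def Lk (t : ℕ) : Matrix (Fin (t+1) × Fin m) (Fin (t+2) × Fin m) ℕ :=
  fun p q =>
    if h : q.1.val < t + 1 then (if (⟨q.1.val, h⟩, q.2) = p then 2 else 0)
    else C A t p q.2 % 2

lemma Lk_le (t : ℕ) (p : Fin (t+1) × Fin m) (q : Fin (t+2) × Fin m) :
    Lk A t p q ≤ 2 := by
  unfold Lk
  split
  · split <;> omega
  · have := Nat.mod_lt (C A t p q.2) (y := 2) (by norm_num); omega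

lemma C_lt (K : ℕ) (hA : ∀ i j, A i j < 2 ^ (K+1)) :
    ∀ t, t ≤ K → ∀ p v, C A t p v < 2 ^ (K + 1 - t) := by
  intro t
  induction t with
  | zero => intro _ p v; simpa [C] using hA p.2 v
  | succ t ih =>
      intro ht p v
      have h1 := ih (by omega)
      unfold C
      split
      · have h2 := h1 (⟨p.1.val, by assumption⟩, p.2) v
        have h3 : K + 1 - t = (K + 1 - (t+1)) + 1 := by omega
        rw [h3, pow_succ] at h2
        omega
      · have h4 : (2:ℕ) ≤ 2 ^ (K + 1 - (t+1)) := by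
          calc (2:ℕ) = 2 ^ 1 := (pow_one 2).symm
          _ ≤ 2 ^ (K + 1 - (t+1)) := Nat.pow_le_pow_right (by norm_num) (by omega)
        split <;> omega

def D : ∀ t : ℕ, Matrix (Fin m) (Fin (t+1) × Fin m) ℕ
  | 0 => fun u p => if p.2 = u then 1 else 0
  | t+1 => D t * Lk A t

lemma factor (t : ℕ) : Lk A t * C A (t+1) = C A t := by
  ext p v
  rw [Matrix.mul_apply, Fintype.sum_prod_type, Fin.sum_univ_castSucc]
  have h1 : ∀ j : Fin (t+1), ∀ y : Fin m,
      Lk A t p (j.castSucc, y) * C A (t+1) (j.castSucc, y) v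
        = (if (j, y) = p then 2 else 0) * (C A t (j, y) v / 2) := by
    intro j y
    have hj : (j.castSucc : Fin (t+2)).val < t + 1 := j.isLt
    simp only [Lk, C, dif_pos hj, Fin.coe_castSucc, Fin.eta]
    simp [j.isLt]
  have h2 : ∀ y : Fin m,
      Lk A t p (Fin.last (t+1), y) * C A (t+1) (Fin.last (t+1), y) v
        = (C A t p y % 2) * (if y = v then 1 else 0) := by
    intro y
    have hj : ¬ ((Fin.last (t+1)).val < t + 1) := by simp [Fin.last]
    simp only [Lk, C, dif_neg hj]
  simp only [h1, h2]
  have e1 : (∑ x : Fin (t+1), ∑ y : Fin m,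
      (if (x, y) = p then 2 else 0) * (C A t (x, y) v / 2)) = 2 * (C A t p v / 2) := by
    rw [Finset.sum_eq_single p.1]
    · rw [Finset.sum_eq_single p.2]
      · simp
      · intro b _ hb; simp [Prod.ext_iff, hb]
      · simp
    · intro a _ ha; apply Finset.sum_eq_zero; intro y _; simp [Prod.ext_iff, ha]
    · simp
  have e2 : (∑ y : Fin m, (C A t p y % 2) * (if y = v then 1 else 0)) = C A t p v % 2 := by
    simp [mul_ite, Finset.sum_ite_eq']
  rw [e1, e2]
  omega

lemma DC : ∀ t : ℕ, D A t * C A t = A := by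
  intro t
  induction t with
  | zero =>
      ext u v
      rw [Matrix.mul_apply, Fintype.sum_prod_type, Fin.sum_univ_one]
      simp only [D, C, ite_mul, one_mul, zero_mul]
      rw [Finset.sum_ite_eq' Finset.univ u]
      simp
  | succ t ih =>
      show D A t * Lk A t * C A (t+1) = A
      rw [Matrix.mul_assoc, factor, ih]

/-- vertex type of the unweighted multigraph -/
abbrev V (m K : ℕ) : Type := (t : Fin (K+1)) × (Fin (t.val+1) × Fin m)

variable (K : ℕ)

def B : Matrix (V m K) (V m K) ℕ := fun p q =>
  if hq : q.1.val = p.1.val + 1 then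
    Lk A p.1.val p.2 (⟨q.2.1.val, by have := q.2.1.isLt; omega⟩, q.2.2)
  else if hp : p.1.val = K ∧ q.1.val = 0 then
    C A K (⟨p.2.1.val, by have := p.2.1.isLt; omega⟩, p.2.2) q.2.2
  else 0

lemma B_le (hA : ∀ i j, A i j < 2 ^ (K+1)) (p q : V m K) : B A K p q ≤ 2 := by
  unfold B
  split
  · apply Lk_le
  · split
    · have := C_lt A K hA K le_rfl (⟨p.2.1.val, by have := p.2.1.isLt; omega⟩, p.2.2) q.2.2
      have h5 : K + 1 - K = 1 := by omega
      rw [h5, pow_one] at this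
      omega
    · omega

lemma B_step (j : ℕ) (hj : j + 1 < K + 1) (x : Fin (j+1) × Fin m) (y : Fin (j+2) × Fin m) :
    B A K ⟨⟨j, by omega⟩, x⟩ ⟨⟨j+1, hj⟩, y⟩ = Lk A j x y := by
  unfold B
  rw [dif_pos rfl]
lemma B_wrap (hK : K < K + 1) (h0 : 0 < K + 1) (x : Fin (K+1) × Fin m)
    (b : Fin 1 × Fin m) :
    B A K ⟨⟨K, hK⟩, x⟩ ⟨⟨0, h0⟩, b⟩ = C A K x b.2 := by
  unfold B
  dsimp only
  rw [dif_neg (by omega), dif_pos ⟨rfl, rfl⟩]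

lemma B_zero (p q : V m K) (h1 : q.1.val ≠ p.1.val + 1)
    (h2 : ¬(p.1.val = K ∧ q.1.val = 0)) : B A K p q = 0 := by
  unfold B
  rw [dif_neg h1, dif_neg h2]

def ι0 (u : Fin m) : V m K := ⟨⟨0, Nat.succ_pos K⟩, (⟨0, Nat.one_pos⟩, u)⟩

end WTU

namespace WTU
variable {m : ℕ} (A : Matrix (Fin m) (Fin m) ℕ) (K : ℕ)

lemma ι0_eq_iff (u : Fin m) (h : (0:ℕ) < K + 1) (x : Fin 1 × Fin m) :
    ι0 K u = (⟨⟨0, h⟩, x⟩ : V m K) ↔ x.2 = u := by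
  constructor
  · intro e
    have := congrArg (fun w : V m K => w.2.2) e
    simpa [ι0] using this.symm
  · intro e
    obtain ⟨x1, x2⟩ := x
    obtain ⟨x1v, hx1⟩ := x1
    simp only at e
    subst e
    have : x1v = 0 := by omega
    subst this
    rfl

lemma rows (u : Fin m) : ∀ j, ∀ hj : j < K + 1,
    (∀ x : Fin (j+1) × Fin m, (B A K ^ j) (ι0 K u) ⟨⟨j, hj⟩, x⟩ = D A j u x)
    ∧ ∀ w : V m K, w.1.val ≠ j → (B A K ^ j) (ι0 K u) w = 0 := by
  intro j
  induction j with
  | zero =>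
      intro hj
      constructor
      · intro x
        rw [pow_zero]
        rcases eq_or_ne (x.2) u with hx | hx
        · have he : ι0 K u = ⟨⟨0, hj⟩, x⟩ := (ι0_eq_iff K u hj x).2 hx
          rw [← he, Matrix.one_apply_eq]
          simp [D, hx]
        · rw [Matrix.one_apply_ne]
          · simp [D, hx]
          · intro e; exact hx ((ι0_eq_iff K u hj x).1 e)
      · intro w hw
        rw [pow_zero]
        apply Matrix.one_apply_ne
        intro e
        exact hw (by rw [← e]; rfl)
  | succ j ih =>
      intro hj
      have hj' : j < K + 1 := by omega
      constructor
      · intro y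
        rw [pow_succ, Matrix.mul_apply, ← Finset.univ_sigma_univ, Finset.sum_sigma]
        rw [Finset.sum_eq_single (⟨j, hj'⟩ : Fin (K+1))]
        · have hDL : ∀ b : Fin (j+1) × Fin m,
              (B A K ^ j) (ι0 K u) ⟨⟨j, hj'⟩, b⟩ * B A K ⟨⟨j, hj'⟩, b⟩ ⟨⟨j+1, hj⟩, y⟩
              = D A j u b * Lk A j b y := by
            intro b
            rw [(ih hj').1 b, B_step A K j hj b y]
          simp only [hDL]
          show _ = D A (j+1) u y
          conv_rhs => rw [D]
          rw [Matrix.mul_apply]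
        · intro t _ ht
          apply Finset.sum_eq_zero
          intro b _
          rw [(ih hj').2 ⟨t, b⟩ (by intro e; exact ht (Fin.ext e)), zero_mul]
        · intro h; exact absurd (Finset.mem_univ _) h
      · intro w hw
        rw [pow_succ, Matrix.mul_apply, ← Finset.univ_sigma_univ, Finset.sum_sigma]
        apply Finset.sum_eq_zero
        intro t _
        apply Finset.sum_eq_zero
        intro b _
        rcases eq_or_ne (t.val) j with ht | ht
        · rw [B_zero, mul_zero]
          · rw [ht]; exact hw
          · rw [ht]; rintro ⟨hK, -⟩; omega
        · rw [(ih hj').2 ⟨t, b⟩ ht, zero_mul]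

lemma round (u : Fin m) :
    (∀ v, (B A K ^ (K+1)) (ι0 K u) (ι0 K v) = A u v)
    ∧ ∀ w : V m K, w.1.val ≠ 0 → (B A K ^ (K+1)) (ι0 K u) w = 0 := by
  have hK : K < K + 1 := by omega
  constructor
  · intro v
    rw [pow_succ, Matrix.mul_apply, ← Finset.univ_sigma_univ, Finset.sum_sigma]
    rw [Finset.sum_eq_single (⟨K, hK⟩ : Fin (K+1))]
    · have hDC : ∀ b : Fin (K+1) × Fin m,
          (B A K ^ K) (ι0 K u) ⟨⟨K, hK⟩, b⟩ * B A K ⟨⟨K, hK⟩, b⟩ (ι0 K v)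
          = D A K u b * C A K b v := by
        intro b
        rw [(rows A K u K hK).1 b]
        show D A K u b * B A K ⟨⟨K, hK⟩, b⟩ ⟨⟨0, Nat.succ_pos K⟩, (⟨0, Nat.one_pos⟩, v)⟩ = _
        rw [B_wrap A K hK (Nat.succ_pos K) b (⟨0, Nat.one_pos⟩, v)]
      simp only [hDC]
      rw [← Matrix.mul_apply, DC]
    · intro t _ ht
      apply Finset.sum_eq_zero
      intro b _
      rw [(rows A K u K hK).2 ⟨t, b⟩ (by intro e; exact ht (Fin.ext e)), zero_mul]
    · intro h; exact absurd (Finset.mem_univ _) h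
  · intro w hw
    rw [pow_succ, Matrix.mul_apply, ← Finset.univ_sigma_univ, Finset.sum_sigma]
    apply Finset.sum_eq_zero
    intro t _
    apply Finset.sum_eq_zero
    intro b _
    rcases eq_or_ne (t.val) K with ht | ht
    · rw [B_zero, mul_zero]
      · show w.1.val ≠ t.val + 1
        have := w.1.isLt
        omega
      · rintro ⟨-, h0⟩; exact hw h0
    · rw [(rows A K u K hK).2 ⟨t, b⟩ ht, zero_mul]

end WTU

namespace WTU
variable {m : ℕ} (A : Matrix (Fin m) (Fin m) ℕ) (K : ℕ)

lemma main : ∀ n : ℕ,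
    (∀ u v : Fin m, (B A K ^ (n * (K+1))) (ι0 K u) (ι0 K v) = (A ^ n) u v)
    ∧ ∀ u : Fin m, ∀ w : V m K, w.1.val ≠ 0 → (B A K ^ (n * (K+1))) (ι0 K u) w = 0 := by
  intro n
  induction n with
  | zero =>
      rw [zero_mul, pow_zero, pow_zero]
      constructor
      · intro u v
        rcases eq_or_ne u v with h | h
        · subst h; rw [Matrix.one_apply_eq, Matrix.one_apply_eq]
        · rw [Matrix.one_apply_ne h, Matrix.one_apply_ne]
          intro e
          exact h (congrArg (fun w : V m K => w.2.2) e)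
      · intro u w hw
        apply Matrix.one_apply_ne
        intro e
        exact hw (by rw [← e]; rfl)
  | succ n ih =>
      have hsplit : (n + 1) * (K + 1) = n * (K + 1) + (K + 1) := by ring
      rw [hsplit, pow_add]
      constructor
      · intro u v
        rw [Matrix.mul_apply, ← Finset.univ_sigma_univ, Finset.sum_sigma]
        rw [Finset.sum_eq_single (⟨0, Nat.succ_pos K⟩ : Fin (K+1))]
        · rw [Fintype.sum_prod_type, Fin.sum_univ_one]
          have hmk : ∀ w' : Fin m,
              (⟨⟨0, Nat.succ_pos K⟩, ((0 : Fin 1), w')⟩ : V m K) = ι0 K w' := fun _ => rfl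
          calc (∑ w' : Fin m,
                (B A K ^ (n * (K+1))) (ι0 K u) ⟨⟨0, Nat.succ_pos K⟩, ((0 : Fin 1), w')⟩
                  * (B A K ^ (K+1)) ⟨⟨0, Nat.succ_pos K⟩, ((0 : Fin 1), w')⟩ (ι0 K v))
              = ∑ w' : Fin m, (A ^ n) u w' * A w' v := by
                apply Finset.sum_congr rfl
                intro w' _
                rw [hmk w', (ih.1 u w'), (round A K w').1 v]
            _ = (A ^ (n+1)) u v := by rw [pow_succ, Matrix.mul_apply]
        · intro t _ ht
          apply Finset.sum_eq_zero
          intro b _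
          rw [ih.2 u ⟨t, b⟩ (by intro e; exact ht (Fin.ext e)), zero_mul]
        · intro h; exact absurd (Finset.mem_univ _) h
      · intro u w hw
        rw [Matrix.mul_apply, ← Finset.univ_sigma_univ, Finset.sum_sigma]
        apply Finset.sum_eq_zero
        intro t _
        apply Finset.sum_eq_zero
        intro b _
        rcases eq_or_ne (t.val) 0 with ht | ht
        · have hb : (⟨t, b⟩ : V m K) = ι0 K b.2 := by
            obtain ⟨tv, htv⟩ := t
            simp only at ht
            subst ht
            obtain ⟨b1, b2⟩ := b
            obtain ⟨b1v, hb1⟩ := b1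
            have hb0 : b1v = 0 := Nat.lt_one_iff.mp hb1
            subst hb0
            rfl
          rw [hb, (round A K b.2).2 w hw, mul_zero]
        · rw [ih.2 u ⟨t, b⟩ ht, zero_mul]

end WTU


/-- From a weighted multigraph (adjacency matrix `A`, entries `< 2^k`) to an
unweighted multigraph with at most two parallel edges between any ordered pair of
vertices (adjacency matrix `B`, entries `≤ 2`): there exist `N`, a matrix `B` indexed
by `Fin N` with entries at most `2`, and an injection `ι : Fin m ↪ Fin N` such that
for all `n`, `(Aⁿ) v₀ v₁ = (B^(n·k)) (ι v₀) (ι v₁)`. -/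
theorem weighted_to_unweighted_pathcount {m : ℕ} (A : Matrix (Fin m) (Fin m) ℕ)
    (v₀ v₁ : Fin m) (k : ℕ) (hk : 1 ≤ k) (hA : ∀ i j : Fin m, A i j < 2 ^ k) :
    ∃ (N : ℕ) (B : Matrix (Fin N) (Fin N) ℕ) (ι : Fin m ↪ Fin N),
      (∀ i j : Fin N, B i j ≤ 2) ∧
      ∀ n : ℕ, (A ^ n) v₀ v₁ = (B ^ (n * k)) (ι v₀) (ι v₁) := by
  obtain ⟨K, rfl⟩ : ∃ K, k = K + 1 := ⟨k - 1, by omega⟩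
  classical
  set e := Fintype.equivFin (WTU.V m K) with he
  refine ⟨Fintype.card (WTU.V m K), Matrix.reindexAlgEquiv ℕ ℕ e (WTU.B A K),
    ⟨fun u => e (WTU.ι0 K u), ?_⟩, ?_, ?_⟩
  · intro a b h
    have h2 : WTU.ι0 K a = WTU.ι0 K b := e.injective h
    exact congrArg (fun w : WTU.V m K => w.2.2) h2
  · intro i j
    rw [Matrix.reindexAlgEquiv_apply, Matrix.reindex_apply, Matrix.submatrix_apply]
    exact WTU.B_le A K hA _ _
  · intro n
    rw [← map_pow, Matrix.reindexAlgEquiv_apply, Matrix.reindex_apply]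
    simp only [Function.Embedding.coeFn_mk, Matrix.submatrix_apply, Equiv.symm_apply_apply]
    change _ = (WTU.B A K ^ (n * (K + 1))) (e.symm (e (WTU.ι0 K v₀))) (e.symm (e (WTU.ι0 K v₁)))
    rw [Equiv.symm_apply_apply, Equiv.symm_apply_apply]
    exact ((WTU.main A K n).1 v₀ v₁).symm
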